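/- Let (x, X, y, Y₁₂, α) ∈ ℝ² × Sym₂(ℝ) × ℝ² × ℝ × ℝ² with α₁ = 0, y₂ − Y₁₂ > 0, and 0 ≤ x₂ − X₂₂ ≤ (y₂ − Y₁₂)/4. Define ρ := √(1 − 4(x₂−X₂₂)/(y₂−Y₁₂)), λ⁻ := (1−ρ)(y₂−Y₁₂)/2, and λ⁺ := (1+ρ)(y₂−Y₁₂)/2. If λ⁻ ≤ α₂ ≤ λ⁺, then the PSD condition (P4a) implies the PSD condition (P5); and if α₂ ≤ λ⁻ or α₂ ≥ λ⁺, then (P5) implies (P4a). -/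

import Mathlib

open Matrix

set_option linter.unusedVariables false

/-- Linear conditions (L). -/
def Lcond (x1 x2 X11 X12 X22 y1 y2 Y12 a1 a2 : ℝ) : Prop :=
  X11 ≤ x1 ∧ x1 ≤ y1 ∧ X22 ≤ x2 ∧ x2 ≤ y2 ∧
  max 0 (x1 - a1 + x2 - a2 - Y12) ≤ X12 ∧ X12 ≤ min (x1 - a1) (x2 - a2) ∧
  0 ≤ a1 ∧ a1 ≤ y1 - Y12 ∧ 0 ≤ a2 ∧ a2 ≤ y2 - Y12 ∧
  max 0 (y1 + y2 - 1) ≤ Y12 ∧ Y12 ≤ min y1 y2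

/-- PSD condition (P3). -/
def P3cond (x1 x2 X11 X12 X22 y1 y2 Y12 a1 a2 : ℝ) : Prop :=
  (!![Y12, x1 - a1, x2 - a2;
      x1 - a1, x1 - a1, X12;
      x2 - a2, X12, x2 - a2] : Matrix (Fin 3) (Fin 3) ℝ).PosSemidef

/-- PSD condition (P4a). -/
def P4acond (x1 x2 X11 X12 X22 y1 y2 Y12 a1 a2 : ℝ) : Prop :=
  (!![y1 - Y12, 0, a1, 0;
      0, Y12, x1 - a1, x2 - a2;
      a1, x1 - a1, X11, X12;
      0, x2 - a2, X12, x2 - a2] : Matrix (Fin 4) (Fin 4) ℝ).PosSemidef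

/-- PSD condition (P4b). -/
def P4bcond (x1 x2 X11 X12 X22 y1 y2 Y12 a1 a2 : ℝ) : Prop :=
  (!![y2 - Y12, 0, 0, a2;
      0, Y12, x1 - a1, x2 - a2;
      0, x1 - a1, x1 - a1, X12;
      a2, x2 - a2, X12, X22] : Matrix (Fin 4) (Fin 4) ℝ).PosSemidef

/-- PSD condition (P5). -/
def P5cond (x1 x2 X11 X12 X22 y1 y2 Y12 a1 a2 : ℝ) : Prop :=
  (!![y1 - Y12, 0, 0, a1, 0;
      0, y2 - Y12, 0, 0, a2;
      0, 0, Y12, x1 - a1, x2 - a2;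
      a1, 0, x1 - a1, X11, X12;
      0, a2, x2 - a2, X12, X22] : Matrix (Fin 5) (Fin 5) ℝ).PosSemidef

set_option maxHeartbeats 1600000 in
/-- With α₁ = 0, y₂ − Y₁₂ > 0 and 0 ≤ x₂ − X₂₂ ≤ (y₂−Y₁₂)/4, set
ρ = √(1 − 4(x₂−X₂₂)/(y₂−Y₁₂)), λ⁻ = (1−ρ)(y₂−Y₁₂)/2, λ⁺ = (1+ρ)(y₂−Y₁₂)/2.
If λ⁻ ≤ α₂ ≤ λ⁺ then (P4a) ⇒ (P5), and if α₂ ≤ λ⁻ or α₂ ≥ λ⁺ then (P5) ⇒ (P4a). -/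
theorem stmt11 (x1 x2 X11 X12 X22 y1 y2 Y12 a2 : ℝ)
    (hy : 0 < y2 - Y12) (h1 : 0 ≤ x2 - X22) (h2 : x2 - X22 ≤ (y2 - Y12) / 4) :
    ((1 - Real.sqrt (1 - 4 * (x2 - X22) / (y2 - Y12))) * (y2 - Y12) / 2 ≤ a2 ∧
      a2 ≤ (1 + Real.sqrt (1 - 4 * (x2 - X22) / (y2 - Y12))) * (y2 - Y12) / 2 →
        (P4acond x1 x2 X11 X12 X22 y1 y2 Y12 0 a2 →
          P5cond x1 x2 X11 X12 X22 y1 y2 Y12 0 a2)) ∧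
    ((a2 ≤ (1 - Real.sqrt (1 - 4 * (x2 - X22) / (y2 - Y12))) * (y2 - Y12) / 2 ∨
      (1 + Real.sqrt (1 - 4 * (x2 - X22) / (y2 - Y12))) * (y2 - Y12) / 2 ≤ a2) →
        (P5cond x1 x2 X11 X12 X22 y1 y2 Y12 0 a2 →
          P4acond x1 x2 X11 X12 X22 y1 y2 Y12 0 a2)) := by
  unfold P4acond P5cond
  set s := y2 - Y12 with hsdef
  have hrad : 0 ≤ 1 - 4 * (x2 - X22) / s := by
    rw [sub_nonneg, div_le_one hy]; linarith
  have hρsq : Real.sqrt (1 - 4 * (x2 - X22) / s) ^ 2 = 1 - 4 * (x2 - X22) / s :=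
    Real.sq_sqrt hrad
  have hρ0 : 0 ≤ Real.sqrt (1 - 4 * (x2 - X22) / s) := Real.sqrt_nonneg _
  set ρ := Real.sqrt (1 - 4 * (x2 - X22) / s) with hrho
  clear_value ρ
  have hρs2 : ρ ^ 2 * s ^ 2 = s ^ 2 - 4 * (x2 - X22) * s := by
    rw [hρsq]; field_simp
  clear_value s
  have hlam : (1 - ρ) * s / 2 ≤ (1 + ρ) * s / 2 := by
    nlinarith [mul_nonneg hρ0 hy.le]
  constructor
  · rintro ⟨hlo, hhi⟩ hP4
    obtain ⟨hH4, hQ4⟩ := posSemidef_iff_dotProduct_mulVec.mp hP4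
    rw [posSemidef_iff_dotProduct_mulVec]
    have hkey : a2 ^ 2 ≤ a2 * s - (x2 - X22) * s := by
      have hP : (0:ℝ) ≤ a2 * s - a2 ^ 2 - (1 - ρ ^ 2) * s ^ 2 / 4 := by
        calc (0:ℝ) ≤ (a2 - (1 - ρ) * s / 2) * ((1 + ρ) * s / 2 - a2) :=
              mul_nonneg (by linarith) (by linarith)
          _ = a2 * s - a2 ^ 2 - (1 - ρ ^ 2) * s ^ 2 / 4 := by ring
      linarith
    constructor
    · ext i j
      fin_cases i <;> fin_cases j <;>
        simp [Matrix.conjTranspose_apply, Matrix.vecHead, Matrix.vecTail]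
    · intro v
      have hq := hQ4 ![v 0, v 2, v 3, v 4]
      simp [Matrix.mulVec, dotProduct, Fin.sum_univ_four, Fin.sum_univ_five, Matrix.vecHead, Matrix.vecTail] at hq ⊢
      nlinarith [hq, mul_pos hy hy, mul_nonneg hy.le (sq_nonneg (s * v 1 + a2 * v 4)),
        mul_nonneg (mul_nonneg hy.le (sq_nonneg (v 4))) (sub_nonneg.2 hkey)]
  · rintro hor hP5
    obtain ⟨hH5, hQ5⟩ := posSemidef_iff_dotProduct_mulVec.mp hP5
    rw [posSemidef_iff_dotProduct_mulVec]
    have hkey2 : a2 * s - (x2 - X22) * s ≤ a2 ^ 2 := by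
      have hP : (0:ℝ) ≤ a2 ^ 2 - a2 * s + (1 - ρ ^ 2) * s ^ 2 / 4 := by
        rcases hor with h | h
        · calc (0:ℝ) ≤ ((1 - ρ) * s / 2 - a2) * ((1 + ρ) * s / 2 - a2) :=
                mul_nonneg (by linarith) (by linarith [h.trans hlam])
            _ = a2 ^ 2 - a2 * s + (1 - ρ ^ 2) * s ^ 2 / 4 := by ring
        · calc (0:ℝ) ≤ (a2 - (1 - ρ) * s / 2) * (a2 - (1 + ρ) * s / 2) :=
                mul_nonneg (by linarith [hlam.trans h]) (by linarith)
            _ = a2 ^ 2 - a2 * s + (1 - ρ ^ 2) * s ^ 2 / 4 := by ring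
      linarith
    constructor
    · ext i j
      fin_cases i <;> fin_cases j <;>
        simp [Matrix.conjTranspose_apply, Matrix.vecHead, Matrix.vecTail]
    · intro w
      have hq := hQ5 ![s * w 0, -(a2 * w 3), s * w 1, s * w 2, s * w 3]
      simp [Matrix.mulVec, dotProduct, Fin.sum_univ_four, Fin.sum_univ_five, Matrix.vecHead, Matrix.vecTail] at hq ⊢
      nlinarith [hq, mul_pos hy hy,
        mul_nonneg (mul_nonneg hy.le (sq_nonneg (w 3))) (sub_nonneg.2 hkey2)]
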